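/- arXiv:2212.11593 — 5 statements merged into one kernel-verified Lean document; each statement's English description precedes it below -/
import Mathlib

section
/- For every unit quaternion q with q ≠ -1, one has U(R(q)) = q. -/
open scoped Classical in
/-- The UQ operator `U : ℝ³ → ℍ`, `U(r) = [cos(‖r‖/2), (r/‖r‖)·sin(‖r‖/2)]` for `r ≠ 0`, `U(0) = 1`. -/
noncomputable def UQ (r : EuclideanSpace ℝ (Fin 3)) : Quaternion ℝ :=
  if r = 0 then 1 else
    ⟨Real.cos (‖r‖ / 2),
     Real.sin (‖r‖ / 2) / ‖r‖ * r 0,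
     Real.sin (‖r‖ / 2) / ‖r‖ * r 1,
     Real.sin (‖r‖ / 2) / ‖r‖ * r 2⟩

/-- The rotation operator `R : ℍ → ℝ³`,
`R(q) = (2·arccos(q₀)/√(q₁²+q₂²+q₃²))·(q₁,q₂,q₃)` if `q₀² ≠ 1`, and `0` otherwise. -/
noncomputable def Rop (q : Quaternion ℝ) : EuclideanSpace ℝ (Fin 3) :=
  if q.re ^ 2 = 1 then 0 else
    (2 * Real.arccos q.re / Real.sqrt (q.imI ^ 2 + q.imJ ^ 2 + q.imK ^ 2)) •
      (WithLp.equiv 2 (Fin 3 → ℝ)).symm ![q.imI, q.imJ, q.imK]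

/-- For every unit quaternion `q` with `q ≠ -1`, one has `U(R(q)) = q`. -/
theorem UQ_Rop (q : Quaternion ℝ) (hq : ‖q‖ = 1) (hne : q ≠ -1) :
    UQ (Rop q) = q := by
  have hnormsq : q.re^2 + q.imI^2 + q.imJ^2 + q.imK^2 = 1 := by
    rw [← Quaternion.normSq_def', Quaternion.normSq_eq_norm_mul_self, hq]; ring
  by_cases h1 : q.re ^ 2 = 1
  · -- then imaginary parts vanish
    have him : q.imI = 0 ∧ q.imJ = 0 ∧ q.imK = 0 := by
      constructor
      · nlinarith [sq_nonneg q.imI, sq_nonneg q.imJ, sq_nonneg q.imK]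
      constructor
      · nlinarith [sq_nonneg q.imI, sq_nonneg q.imJ, sq_nonneg q.imK]
      · nlinarith [sq_nonneg q.imI, sq_nonneg q.imJ, sq_nonneg q.imK]
    have hprod : (q.re - 1) * (q.re + 1) = 0 := by nlinarith
    rcases mul_eq_zero.mp hprod with h | h
    · have hre : q.re = 1 := by linarith
      have hq1 : q = 1 := by
        ext <;> simp [hre, him.1, him.2.1, him.2.2] <;> rfl
      rw [Rop, if_pos h1, hq1, UQ]; exact if_pos rfl
    · exact absurd (by ext <;> simp [show q.re = -1 by linarith, him.1, him.2.1, him.2.2] <;> rfl : q = -1) hne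
  · -- main case
    have hre_sq_lt : q.re ^ 2 < 1 := by
      rcases lt_or_gt_of_ne h1 with h | h
      · exact h
      · exfalso
        nlinarith [sq_nonneg q.imI, sq_nonneg q.imJ, sq_nonneg q.imK]
    have hre1 : -1 ≤ q.re := by nlinarith
    have hre2 : q.re ≤ 1 := by nlinarith
    have hrelt : q.re < 1 := by nlinarith
    set s := Real.sqrt (q.imI ^ 2 + q.imJ ^ 2 + q.imK ^ 2) with hs
    have hssq : s ^ 2 = q.imI ^ 2 + q.imJ ^ 2 + q.imK ^ 2 := by
      rw [hs, Real.sq_sqrt]; positivity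
    have hspos : 0 < s := by
      rw [hs]
      apply Real.sqrt_pos.mpr
      nlinarith
    set θ := Real.arccos q.re with hθ
    have hθpos : 0 < θ := Real.arccos_pos.mpr hrelt
    have hθle : θ ≤ Real.pi := Real.arccos_le_pi _
    have hcos : Real.cos θ = q.re := Real.cos_arccos hre1 hre2
    have hsin : Real.sin θ = s := by
      rw [hθ, Real.sin_arccos, hs]
      congr 1
      nlinarith
    set c := 2 * θ / s with hc
    have hcpos : 0 < c := by positivity
    set r := Rop q with hr
    have hrdef : r = c • (WithLp.equiv 2 (Fin 3 → ℝ)).symm ![q.imI, q.imJ, q.imK] := by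
      rw [hr, Rop, if_neg h1]
    have hvnorm : ‖(WithLp.equiv 2 (Fin 3 → ℝ)).symm ![q.imI, q.imJ, q.imK]‖ = s := by
      rw [EuclideanSpace.norm_eq, hs]
      congr 1
      simp [Fin.sum_univ_three, sq]
    have hrnorm : ‖r‖ = 2 * θ := by
      rw [hrdef, norm_smul, hvnorm, Real.norm_eq_abs, abs_of_pos hcpos, hc]
      field_simp
    have hrne : r ≠ 0 := by
      intro h
      rw [h, norm_zero] at hrnorm
      linarith
    have hri : ∀ i, r i = c * ![q.imI, q.imJ, q.imK] i := by
      intro i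
      rw [hrdef]
      rfl
    have hU : UQ r = (⟨Real.cos (2 * θ / 2), Real.sin (2 * θ / 2) / (2 * θ) * r 0,
        Real.sin (2 * θ / 2) / (2 * θ) * r 1, Real.sin (2 * θ / 2) / (2 * θ) * r 2⟩ : Quaternion ℝ) := by
      simp only [UQ, if_neg hrne, hrnorm]
      exact if_neg hrne
    rw [hU]
    have h2θ : 2 * θ / 2 = θ := by ring
    have hkey : Real.sin (2 * θ / 2) / (2 * θ) * c = 1 := by
      rw [h2θ, hsin, hc]
      field_simp
    ext
    · show Real.cos (2 * θ / 2) = q.re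
      rw [h2θ, hcos]
    · show Real.sin (2 * θ / 2) / (2 * θ) * r 0 = q.imI
      rw [hri 0, ← mul_assoc, hkey, one_mul]; rfl
    · show Real.sin (2 * θ / 2) / (2 * θ) * r 1 = q.imJ
      rw [hri 1, ← mul_assoc, hkey, one_mul]; rfl
    · show Real.sin (2 * θ / 2) / (2 * θ) * r 2 = q.imK
      rw [hri 2, ← mul_assoc, hkey, one_mul]; rfl
end

section
/- For every vector r in ℝ³ with ‖r‖₂ < 2π, one has R(U(r)) = r. -/
/-- For every vector `r ∈ ℝ³` with `‖r‖₂ < 2π`, one has `R(U(r)) = r`. -/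
theorem Rop_UQ (r : EuclideanSpace ℝ (Fin 3)) (hr : ‖r‖ < 2 * Real.pi) :
    Rop (UQ r) = r := by
  by_cases h : r = 0
  · subst h
    simp [UQ, Rop, Quaternion.re_one]
  · have hn : 0 < ‖r‖ := norm_pos_iff.mpr h
    have hhalf : 0 < ‖r‖ / 2 := by linarith
    have hhalf' : ‖r‖ / 2 < Real.pi := by linarith
    have hsin : 0 < Real.sin (‖r‖ / 2) := Real.sin_pos_of_pos_of_lt_pi hhalf hhalf'
    have hcos : Real.cos (‖r‖ / 2) ^ 2 ≠ 1 := by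
      intro hc
      have := Real.sin_sq_add_cos_sq (‖r‖ / 2)
      nlinarith
    have hsum : r 0 ^ 2 + r 1 ^ 2 + r 2 ^ 2 = ‖r‖ ^ 2 := by
      have h1 := EuclideanSpace.norm_eq r
      rw [h1, Fin.sum_univ_three] at *
      rw [Real.sq_sqrt (by positivity)]
      simp [Real.norm_eq_abs, sq_abs]
    unfold Rop
    rw [show UQ r = ⟨Real.cos (‖r‖ / 2),
     Real.sin (‖r‖ / 2) / ‖r‖ * r 0,
     Real.sin (‖r‖ / 2) / ‖r‖ * r 1,
     Real.sin (‖r‖ / 2) / ‖r‖ * r 2⟩ from if_neg h]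
    rw [if_neg hcos]
    dsimp only
    have hsq : (Real.sin (‖r‖ / 2) / ‖r‖ * r 0) ^ 2 + (Real.sin (‖r‖ / 2) / ‖r‖ * r 1) ^ 2
        + (Real.sin (‖r‖ / 2) / ‖r‖ * r 2) ^ 2 = Real.sin (‖r‖ / 2) ^ 2 := by
      field_simp
      ring_nf
      nlinarith [hsum]
    rw [hsq, Real.sqrt_sq hsin.le, Real.arccos_cos hhalf.le hhalf'.le]
    ext i
    fin_cases i <;>
      simp [PiLp.smul_apply] <;>
      · field_simp
end

section
/- For every motion x = [r, t] with r, t ∈ ℝ³, the dual quaternion Û(x) = U(r) + (1/2)·U(r)·t̃·ε is a unit dual quaternion, where t̃ = [0, t] is the vector quaternion with imaginary part t. -/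
/-- The vector quaternion `t̃ = [0, t]` associated with `t ∈ ℝ³`. -/
noncomputable def tq (t : EuclideanSpace ℝ (Fin 3)) : Quaternion ℝ := ⟨0, t 0, t 1, t 2⟩

/-- The UDQ operator: the dual quaternion `Û(x) = U(r) + (1/2)·U(r)·t̃·ε` of a motion `x = [r, t]`. -/
noncomputable def Uhat (r t : EuclideanSpace ℝ (Fin 3)) : DualNumber (Quaternion ℝ) :=
  (UQ r, (2⁻¹ : ℝ) • (UQ r * tq t))

lemma sum_sq (r : EuclideanSpace ℝ (Fin 3)) : r 0 ^ 2 + r 1 ^ 2 + r 2 ^ 2 = ‖r‖ ^ 2 := by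
  rw [EuclideanSpace.norm_eq, Real.sq_sqrt (by positivity), Fin.sum_univ_three]
  simp [Real.norm_eq_abs, sq_abs]

lemma normSq_UQ (r : EuclideanSpace ℝ (Fin 3)) : Quaternion.normSq (UQ r) = 1 := by
  by_cases h : r = 0
  · simp [UQ, h]
  · have hn : ‖r‖ ≠ 0 := norm_ne_zero_iff.mpr h
    have hU : UQ r = (⟨Real.cos (‖r‖ / 2), Real.sin (‖r‖ / 2) / ‖r‖ * r 0,
        Real.sin (‖r‖ / 2) / ‖r‖ * r 1, Real.sin (‖r‖ / 2) / ‖r‖ * r 2⟩ : Quaternion ℝ) := if_neg h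
    rw [Quaternion.normSq_def', hU]
    have key : (Real.sin (‖r‖ / 2) / ‖r‖ * r 0) ^ 2 + (Real.sin (‖r‖ / 2) / ‖r‖ * r 1) ^ 2 +
        (Real.sin (‖r‖ / 2) / ‖r‖ * r 2) ^ 2 = Real.sin (‖r‖ / 2) ^ 2 := by
      have := sum_sq r
      field_simp
      ring_nf
      nlinarith [sum_sq r]
    simp only []
    rw [show Real.cos (‖r‖ / 2) ^ 2 + (Real.sin (‖r‖ / 2) / ‖r‖ * r 0) ^ 2 +
        (Real.sin (‖r‖ / 2) / ‖r‖ * r 1) ^ 2 + (Real.sin (‖r‖ / 2) / ‖r‖ * r 2) ^ 2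
        = Real.cos (‖r‖ / 2) ^ 2 + ((Real.sin (‖r‖ / 2) / ‖r‖ * r 0) ^ 2 +
        (Real.sin (‖r‖ / 2) / ‖r‖ * r 1) ^ 2 + (Real.sin (‖r‖ / 2) / ‖r‖ * r 2) ^ 2) by ring,
      key]
    rw [add_comm]
    exact Real.sin_sq_add_cos_sq _

/-- For every motion `x = [r, t]`, the dual quaternion `Û(x) = U(r) + (1/2)·U(r)·t̃·ε` is a unit dual quaternion: its standard part is a unit quaternion and the standard and dual parts satisfy the orthogonality identity. -/
theorem Uhat_is_unit_dual_quaternion (r t : EuclideanSpace ℝ (Fin 3)) :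
    ‖(Uhat r t).fst‖ = 1 ∧
      (Uhat r t).fst * star (Uhat r t).snd + (Uhat r t).snd * star (Uhat r t).fst = 0 := by
  constructor
  · have h := normSq_UQ r
    rw [Quaternion.normSq_eq_norm_mul_self] at h
    have : ‖(Uhat r t).fst‖ = ‖UQ r‖ := rfl
    rw [this]
    nlinarith [norm_nonneg (UQ r)]
  · show UQ r * star ((2⁻¹ : ℝ) • (UQ r * tq t)) + ((2⁻¹ : ℝ) • (UQ r * tq t)) * star (UQ r) = 0
    have hstar : star ((2⁻¹:ℝ) • (UQ r * tq t)) = (2⁻¹:ℝ) • (star (tq t) * star (UQ r)) := by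
      rw [← Quaternion.coe_mul_eq_smul, star_mul, star_mul, Quaternion.star_coe,
        ← Quaternion.coe_commutes, Quaternion.coe_mul_eq_smul]
    have hst : star (tq t) = - tq t := by
      ext <;> simp <;> simp [tq]
    rw [hstar, hst, mul_smul_comm, smul_mul_assoc, ← smul_add, neg_mul, mul_neg, mul_assoc,
      neg_add_cancel, smul_zero]
end

section
/- Let x = [r, t] be a motion with ‖r‖₂ < 2π and t ∈ ℝ³. Then M(Û(x)) = x; that is, R(U(r)) = r and the imaginary part of 2·U(r)⁻¹·((1/2)·U(r)·t̃) equals t, where t̃ = [0, t]. -/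
/-- The imaginary part of a quaternion, as a vector in `ℝ³`. -/
noncomputable def imVec (q : Quaternion ℝ) : EuclideanSpace ℝ (Fin 3) :=
  (WithLp.equiv 2 (Fin 3 → ℝ)).symm ![q.imI, q.imJ, q.imK]

lemma UQ_ne_zero (r : EuclideanSpace ℝ (Fin 3)) : UQ r ≠ 0 := by
  by_cases hne : r = 0
  · rw [show UQ r = 1 from if_pos hne]; exact one_ne_zero
  · intro h
    have e : UQ r = ⟨Real.cos (‖r‖ / 2), Real.sin (‖r‖ / 2) / ‖r‖ * r 0,
        Real.sin (‖r‖ / 2) / ‖r‖ * r 1, Real.sin (‖r‖ / 2) / ‖r‖ * r 2⟩ := if_neg hne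
    rw [e] at h
    have hc : Real.cos (‖r‖ / 2) = 0 := by
      have := congrArg QuaternionAlgebra.re h; simpa [Quaternion.re_zero] using this
    have h1 : Real.sin (‖r‖ / 2) / ‖r‖ * r 0 = 0 := by
      have := congrArg QuaternionAlgebra.imI h; simpa [Quaternion.imI_zero] using this
    have h2 : Real.sin (‖r‖ / 2) / ‖r‖ * r 1 = 0 := by
      have := congrArg QuaternionAlgebra.imJ h; simpa [Quaternion.imJ_zero] using this
    have h3 : Real.sin (‖r‖ / 2) / ‖r‖ * r 2 = 0 := by
      have := congrArg QuaternionAlgebra.imK h; simpa [Quaternion.imK_zero] using this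
    have hs : Real.sin (‖r‖ / 2) ≠ 0 := by
      intro hs
      have := Real.sin_sq_add_cos_sq (‖r‖ / 2)
      rw [hs, hc] at this; norm_num at this
    have hn : ‖r‖ ≠ 0 := norm_ne_zero_iff.mpr hne
    have hd : Real.sin (‖r‖ / 2) / ‖r‖ ≠ 0 := div_ne_zero hs hn
    apply hne
    ext i
    fin_cases i
    · simpa [hd] using mul_eq_zero.mp h1
    · simpa [hd] using mul_eq_zero.mp h2
    · simpa [hd] using mul_eq_zero.mp h3

/-- For a motion `x = [r, t]` with `‖r‖₂ < 2π`, one has `M(Û(x)) = x`: namely `R(U(r)) = r`, and the imaginary part of `2·U(r)⁻¹·((1/2)·U(r)·t̃)` equals `t`. -/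
theorem motion_Uhat (r t : EuclideanSpace ℝ (Fin 3)) (hr : ‖r‖ < 2 * Real.pi) :
    Rop (UQ r) = r ∧
      imVec ((2 : Quaternion ℝ) * (UQ r)⁻¹ * ((2⁻¹ : ℝ) • (UQ r * tq t))) = t := by
  constructor
  · by_cases h0 : r = 0
    · subst h0
      simp [UQ, Rop, Quaternion.re_one, Quaternion.imI_one, Quaternion.imJ_one, Quaternion.imK_one]
    · have hn : 0 < ‖r‖ := norm_pos_iff.mpr h0
      set θ := ‖r‖ / 2 with hθ
      have hθpos : 0 < θ := by positivity
      have hθlt : θ < Real.pi := by rw [hθ]; linarith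
      have hsin : 0 < Real.sin θ := Real.sin_pos_of_pos_of_lt_pi hθpos hθlt
      have hcos2 : Real.cos θ ^ 2 ≠ 1 := by
        have := Real.sin_sq_add_cos_sq θ
        nlinarith
      have hre : (UQ r).re = Real.cos θ := by simp [UQ, h0, hθ]
      have him : ∀ i : Fin 3, (![(UQ r).imI, (UQ r).imJ, (UQ r).imK] : Fin 3 → ℝ) i
          = Real.sin θ / ‖r‖ * r i := by
        intro i; fin_cases i <;> simp [UQ, h0, hθ]
      have hnorm : r 0 ^ 2 + r 1 ^ 2 + r 2 ^ 2 = ‖r‖ ^ 2 := by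
        rw [EuclideanSpace.norm_eq, Real.sq_sqrt (by positivity), Fin.sum_univ_three]
        simp [sq_abs]
      have hsum : (UQ r).imI ^ 2 + (UQ r).imJ ^ 2 + (UQ r).imK ^ 2 = Real.sin θ ^ 2 := by
        have e0 := him 0; have e1 := him 1; have e2 := him 2
        simp only [Matrix.cons_val_zero, Matrix.cons_val_one, Matrix.head_cons,
          Matrix.cons_val_two, Matrix.tail_cons] at e0 e1 e2
        rw [e0, e1, e2]
        field_simp
        nlinarith [hnorm]
      rw [Rop, if_neg (by rw [hre]; exact hcos2)]
      rw [hsum, Real.sqrt_sq hsin.le, hre, Real.arccos_cos hθpos.le hθlt.le]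
      ext i
      simp only [PiLp.smul_apply, smul_eq_mul]
      rw [show ((WithLp.equiv 2 (Fin 3 → ℝ)).symm ![(UQ r).imI, (UQ r).imJ, (UQ r).imK]) i
          = Real.sin θ / ‖r‖ * r i from him i]
      rw [hθ]
      have hs' : Real.sin (‖r‖ / 2) ≠ 0 := hsin.ne'
      field_simp
  · have hinv : (2 : Quaternion ℝ) * (UQ r)⁻¹ * ((2⁻¹ : ℝ) • (UQ r * tq t))
        = (2⁻¹ : ℝ) • ((2 : Quaternion ℝ) * tq t) := by
      rw [mul_smul_comm, mul_assoc, ← mul_assoc (UQ r)⁻¹,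
        inv_mul_cancel₀ (UQ_ne_zero r), one_mul]
    rw [hinv]
    ext i
    fin_cases i <;>
      · simp [imVec, show (tq t).re = 0 from rfl, show (tq t).imI = t 0 from rfl,
          show (tq t).imJ = t 1 from rfl, show (tq t).imK = t 2 from rfl, Quaternion.imI_mul, Quaternion.imJ_mul, Quaternion.imK_mul,
          show QuaternionAlgebra.re (2:Quaternion ℝ) = 2 from rfl,
          show QuaternionAlgebra.imI (2:Quaternion ℝ) = 0 from rfl,
          show QuaternionAlgebra.imJ (2:Quaternion ℝ) = 0 from rfl,
          show QuaternionAlgebra.imK (2:Quaternion ℝ) = 0 from rfl]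
end

section
/- Let q + q_d·ε be a unit dual quaternion with q ≠ −1. Then Û(M(q + q_d·ε)) = q + q_d·ε; that is, U(R(q)) = q and (1/2)·U(R(q))·(2·q⁻¹·q_d) = q_d. -/
/-- If `q + q_d·ε` is a unit dual quaternion with `q ≠ −1`, then `Û(M(q + q_d·ε)) = q + q_d·ε`: namely `U(R(q)) = q` and `(1/2)·U(R(q))·(2·q⁻¹·q_d) = q_d`. -/
theorem Uhat_motion (q qd : Quaternion ℝ) (hq : ‖q‖ = 1)
    (h : q * star qd + qd * star q = 0) (hne : q ≠ -1) :
    UQ (Rop q) = q ∧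
      (2⁻¹ : ℝ) • (UQ (Rop q) * ((2 : Quaternion ℝ) * q⁻¹ * qd)) = qd := by
  have hq0 : q ≠ 0 := by
    intro h0; rw [h0] at hq; simp at hq
  have hns : q.re^2 + q.imI^2 + q.imJ^2 + q.imK^2 = 1 := by
    have := Quaternion.normSq_eq_norm_mul_self (a := q)
    rw [hq] at this
    simpa [Quaternion.normSq_def', sq] using this
  have hmain : UQ (Rop q) = q := by
    by_cases hre : q.re ^ 2 = 1
    · have hI : q.imI = 0 := by nlinarith [sq_nonneg q.imI, sq_nonneg q.imJ, sq_nonneg q.imK]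
      have hJ : q.imJ = 0 := by nlinarith [sq_nonneg q.imI, sq_nonneg q.imJ, sq_nonneg q.imK]
      have hK : q.imK = 0 := by nlinarith [sq_nonneg q.imI, sq_nonneg q.imJ, sq_nonneg q.imK]
      have hre1 : q.re = 1 := by
        have hcases : q.re = 1 ∨ q.re = -1 := by
          have : (q.re - 1) * (q.re + 1) = 0 := by nlinarith
          rcases mul_eq_zero.mp this with h1 | h1
          · left; linarith
          · right; linarith
        rcases hcases with h1 | h1
        · exact h1
        · exact absurd (by ext <;> simp [hI, hJ, hK, h1, Quaternion.re_one, Quaternion.imI_one, Quaternion.imJ_one, Quaternion.imK_one]) hne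
      have : Rop q = 0 := by simp [Rop, hre]
      rw [this]
      ext <;> simp [UQ, hre1, hI, hJ, hK, Quaternion.re_one, Quaternion.imI_one, Quaternion.imJ_one, Quaternion.imK_one]
    · have hrele : q.re ^ 2 < 1 :=
        lt_of_le_of_ne (by nlinarith [sq_nonneg q.imI, sq_nonneg q.imJ, sq_nonneg q.imK]) hre
      have hre_lt : q.re < 1 := by nlinarith
      have hre_gt : -1 < q.re := by nlinarith
      set s := Real.sqrt (q.imI ^ 2 + q.imJ ^ 2 + q.imK ^ 2) with hs_def
      have hsum_nonneg : (0:ℝ) ≤ q.imI ^ 2 + q.imJ ^ 2 + q.imK ^ 2 := by positivity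
      have hs2 : s ^ 2 = 1 - q.re ^ 2 := by
        rw [hs_def, Real.sq_sqrt hsum_nonneg]; linarith
      have hspos : 0 < s := by
        rw [hs_def]
        apply Real.sqrt_pos.mpr
        nlinarith
      set a := Real.arccos q.re with ha_def
      have hapos : 0 < a := Real.arccos_pos.mpr hre_lt
      have hcos : Real.cos a = q.re := Real.cos_arccos (by linarith) (by linarith)
      have hsin : Real.sin a = s := by
        rw [ha_def, Real.sin_arccos, ← hs2, Real.sqrt_sq hspos.le]
      have hRop : Rop q = (2 * a / s) • (WithLp.equiv 2 (Fin 3 → ℝ)).symm ![q.imI, q.imJ, q.imK] := by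
        simp [Rop, hre, ← hs_def, ← ha_def]
      have hnormv : ‖(WithLp.equiv 2 (Fin 3 → ℝ)).symm ![q.imI, q.imJ, q.imK]‖ = s := by
        rw [EuclideanSpace.norm_eq, hs_def]
        congr 1
        simp [Fin.sum_univ_three, sq]
      have hnorm : ‖Rop q‖ = 2 * a := by
        rw [hRop, norm_smul, hnormv, Real.norm_eq_abs,
          abs_of_pos (by positivity)]
        field_simp
      have hR0 : Rop q ≠ 0 := by
        intro h0
        rw [h0, norm_zero] at hnorm
        linarith
      have happ : ∀ i, Rop q i = (2 * a / s) * (![q.imI, q.imJ, q.imK] i) := by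
        intro i
        rw [hRop]
        simp
      have hkey : Real.sin (‖Rop q‖ / 2) / ‖Rop q‖ * (2 * a / s) = 1 := by
        rw [hnorm]
        have : 2 * a / 2 = a := by ring
        rw [this, hsin]
        field_simp
      ext
      · simp [UQ, hR0, hnorm]
        exact hcos
      · simp only [UQ, hR0, if_neg hR0]
        rw [happ 0, ← mul_assoc, hkey]
        simp
      · simp only [UQ, hR0, if_neg hR0]
        rw [happ 1, ← mul_assoc, hkey]
        simp
      · simp only [UQ, hR0, if_neg hR0]
        rw [happ 2, ← mul_assoc, hkey]
        simp
  refine ⟨hmain, ?_⟩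
  rw [hmain]
  have h2 : q * ((2 : Quaternion ℝ) * q⁻¹ * qd) = 2 * qd := by
    have hc : (2:Quaternion ℝ) * q⁻¹ = q⁻¹ * 2 := by
      have := (Quaternion.coe_commute (2:ℝ) q⁻¹); exact this.eq
    rw [hc, ← mul_assoc, ← mul_assoc, mul_inv_cancel₀ hq0, one_mul]
  rw [h2]
  have : (2 : Quaternion ℝ) * qd = (2:ℝ) • qd := by
    rw [two_mul, two_smul]
  rw [this, smul_smul]; norm_num
end
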